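/- Let f be a C⁴ quaternion-valued function on an open subset of ℝ⁴. Then □(Z⁺·f) = 2∇f + Z⁺·□f, where Z = z⁰e₀+z¹e₁+z²e₂+z³e₃ and Z⁺ = z⁰e₀−z¹e₁−z²e₂−z³e₃ is quaternionic conjugation, and the products are quaternionic multiplication. -/

import Mathlib

noncomputable section

/-- The real quaternions. -/
abbrev Hq := Quaternion ℝ

/-- The quaternionic units `e₀ = 1, e₁, e₂, e₃`. -/
def qe : Fin 4 → Hq := ![1, ⟨0,1,0,0⟩, ⟨0,0,1,0⟩, ⟨0,0,0,1⟩]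

/-- Partial derivative `∂/∂zⁱ` of a quaternion-valued function on ℝ⁴. -/
def pdq (i : Fin 4) (f : (Fin 4 → ℝ) → Hq) : (Fin 4 → ℝ) → Hq :=
  fun x => fderiv ℝ f x (Pi.single i 1)

/-- `∇ = e₀∂₀ − e₁∂₁ − e₂∂₂ − e₃∂₃`. -/
def DMinus (f : (Fin 4 → ℝ) → Hq) : (Fin 4 → ℝ) → Hq :=
  fun x => pdq 0 f x - qe 1 * pdq 1 f x - qe 2 * pdq 2 f x - qe 3 * pdq 3 f x

/-- The four-dimensional Laplacian `□ = ∑ᵢ ∂ᵢ²`. -/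
def lapq (f : (Fin 4 → ℝ) → Hq) : (Fin 4 → ℝ) → Hq :=
  fun x => ∑ i : Fin 4, pdq i (pdq i f) x

/-- The quaternion `Z = z⁰e₀ + z¹e₁ + z²e₂ + z³e₃` attached to a point of ℝ⁴;
its quaternionic conjugate `Z⁺` is `star (Zq x)`. -/
def Zq (x : Fin 4 → ℝ) : Hq := ∑ i : Fin 4, x i • qe i

set_option maxHeartbeats 1000000
set_option synthInstance.maxHeartbeats 400000

def Lc : (Fin 4 → ℝ) →L[ℝ] Hq :=
  LinearMap.toContinuousLinearMap
    { toFun := fun y => star (Zq y)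
      map_add' := by
        intro a b
        simp [Zq, add_smul, Finset.sum_add_distrib]
      map_smul' := by
        intro c a
        simp [Zq, Finset.smul_sum, smul_smul] }

lemma Lc_apply (y : Fin 4 → ℝ) : Lc y = star (Zq y) := rfl

lemma Zq_single (i : Fin 4) : Zq (Pi.single i 1) = qe i := by
  simp [Zq, Pi.single_apply]

lemma pdq_Lc_mul (i : Fin 4) (f : (Fin 4 → ℝ) → Hq) (x : Fin 4 → ℝ)
    (hf : DifferentiableAt ℝ f x) :
    pdq i (fun y => Lc y * f y) x = star (qe i) * f x + Lc x * pdq i f x := by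
  have h : HasFDerivAt (fun y => Lc y * f y) _ x := (Lc.hasFDerivAt (x := x)).mul' hf.hasFDerivAt
  have := h.fderiv
  simp only [pdq, this]
  simp [ContinuousLinearMap.smulRight_apply, Lc_apply, Zq_single, smul_eq_mul, add_comm]

example : True := trivial

lemma star_qe1 : star (qe 1) = -qe 1 := by
  have : qe 1 = (⟨0,1,0,0⟩ : Hq) := rfl
  rw [this]; exact Quaternion.star_eq_neg.2 rfl

lemma star_qe2 : star (qe 2) = -qe 2 := by
  have : qe 2 = (⟨0,0,1,0⟩ : Hq) := rfl
  rw [this]; exact Quaternion.star_eq_neg.2 rfl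

lemma star_qe3 : star (qe 3) = -qe 3 := by
  have : qe 3 = (⟨0,0,0,1⟩ : Hq) := rfl
  rw [this]; exact Quaternion.star_eq_neg.2 rfl

lemma star_qe0 : star (qe 0) = 1 := by
  have : qe 0 = (1 : Hq) := rfl
  rw [this]; exact star_one _

/-- for a C⁴ quaternion-valued function `f` on an open subset `U` of ℝ⁴,
`□(Z⁺·f) = 2∇f + Z⁺·□f` on `U`. -/
theorem laplacian_conj_mul (U : Set (Fin 4 → ℝ)) (hU : IsOpen U)
    (f : (Fin 4 → ℝ) → Hq) (hf : ContDiffOn ℝ 4 f U) :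
    ∀ x ∈ U, lapq (fun y => star (Zq y) * f y) x
      = 2 * DMinus f x + star (Zq x) * lapq f x := by
  intro x hx
  have hmem : U ∈ nhds x := hU.mem_nhds hx
  have hfd : ∀ y ∈ U, DifferentiableAt ℝ f y := fun y hy =>
    (hf.contDiffAt (hU.mem_nhds hy)).differentiableAt (by norm_num)
  have hpdq : ∀ i : Fin 4, ContDiffAt ℝ 3 (pdq i f) x := by
    intro i
    have h1 : ContDiffAt ℝ 3 (fderiv ℝ f) x :=
      (hf.contDiffAt hmem).fderiv_right (by norm_num)
    exact h1.clm_apply contDiffAt_const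
  have key : ∀ i : Fin 4, pdq i (pdq i (fun y => star (Zq y) * f y)) x
      = 2 * (star (qe i) * pdq i f x) + star (Zq x) * pdq i (pdq i f) x := by
    intro i
    show pdq i (pdq i (fun y => Lc y * f y)) x
      = 2 * (star (qe i) * pdq i f x) + Lc x * pdq i (pdq i f) x
    have hev : pdq i (fun y => Lc y * f y) =ᶠ[nhds x]
        (fun y => star (qe i) * f y + Lc y * pdq i f y) := by
      filter_upwards [hmem] with y hy
      exact pdq_Lc_mul i f y (hfd y hy)
    have hdf : DifferentiableAt ℝ (pdq i f) x :=
      (hpdq i).differentiableAt (by norm_num)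
    have h1 : HasFDerivAt (fun y => star (qe i) * f y)
        ((star (qe i)) • (fderiv ℝ f x)) x :=
      (hfd x hx).hasFDerivAt.const_mul _
    have h2 : HasFDerivAt (fun y => Lc y * pdq i f y) _ x := (Lc.hasFDerivAt (x := x)).mul' hdf.hasFDerivAt
    have htot : HasFDerivAt (fun y => star (qe i) * f y + Lc y * pdq i f y) _ x := h1.add h2
    have hfe := hev.fderiv_eq (𝕜 := ℝ)
    show fderiv ℝ (pdq i (fun y => Lc y * f y)) x (Pi.single i 1) = _
    rw [hfe, htot.fderiv]
    simp only [ContinuousLinearMap.add_apply, ContinuousLinearMap.smul_apply,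
      ContinuousLinearMap.smulRight_apply, ContinuousLinearMap.coe_smul',
      Pi.smul_apply, smul_eq_mul, op_smul_eq_mul, Lc_apply, Zq_single]
    show star (qe i) * (fderiv ℝ f x) (Pi.single i 1) +
      (star (Zq x) * (fderiv ℝ (pdq i f) x) (Pi.single i 1) + star (qe i) * pdq i f x) = _
    show _ = 2 * (star (qe i) * (fderiv ℝ f x) (Pi.single i 1))
      + star (Zq x) * (fderiv ℝ (pdq i f) x) (Pi.single i 1)
    simp only [pdq]
    noncomm_ring
  simp only [lapq, Fin.sum_univ_four, key, DMinus, star_qe0, star_qe1, star_qe2,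
    star_qe3]
  noncomm_ring
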